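/- There exist 6 lines through the origin in R^3 (the diagonals of a regular icosahedron) such that the angle between any two of them equals arccos(1/√5); equivalently, 6 unit vectors u_1,...,u_6 in R^3 with (u_i·u_j)² = 1/5 for all i ≠ j, achieving equality in the simplex bound for N=6, m=3. -/

import Mathlib

open scoped RealInnerProductSpace

noncomputable section

local notation "τ" => (1 + Real.sqrt 5) / 2

private def V : Fin 6 → Fin 3 → ℝ :=
  ![![0, 1, τ], ![0, -1, τ], ![1, τ, 0], ![-1, τ, 0], ![τ, 0, 1], ![τ, 0, -1]]

private def U : Fin 6 → EuclideanSpace ℝ (Fin 3) := fun i => WithLp.toLp 2 (fun k => (Real.sqrt (τ + 2))⁻¹ * V i k)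

private lemma sqrt5_sq : Real.sqrt 5 ^ 2 = 5 := Real.sq_sqrt (by norm_num)

private lemma hc2 : ((Real.sqrt (τ + 2))⁻¹) ^ 2 = (τ + 2)⁻¹ := by
  rw [← Real.sqrt_inv, Real.sq_sqrt (by positivity)]

private lemma inner_eq (i j : Fin 6) :
    ⟪U i, U j⟫ = (τ + 2)⁻¹ * (∑ k, V i k * V j k) := by
  rw [PiLp.inner_apply]
  simp only [U, PiLp.toLp_apply, RCLike.inner_apply, conj_trivial]
  rw [← hc2, Finset.mul_sum]
  congr 1; ext k; ring

private lemma hne : τ + 2 ≠ 0 := by positivity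

set_option maxHeartbeats 2000000 in
/-- There exist 6 lines through the origin in `ℝ³` (the diagonals of a regular
icosahedron), i.e. 6 unit vectors, such that `⟪u i, u j⟫² = 1/5` for all `i ≠ j` —
the angle between any two lines is `arccos (1/√5)`, achieving equality in the
simplex bound `(N-m)/(m(N-1)) = 1/5` for `N = 6`, `m = 3`. -/
theorem six_lines_in_R3 :
    ∃ u : Fin 6 → EuclideanSpace ℝ (Fin 3),
      (∀ i, ‖u i‖ = 1) ∧
      (∀ i j, i ≠ j → ⟪u i, u j⟫ ^ 2 = 1 / 5) ∧
      ((6 : ℝ) - 3) / (3 * ((6 : ℝ) - 1)) = 1 / 5 := by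
  have h5 := sqrt5_sq
  have hn := hne
  refine ⟨U, ?_, ?_, by norm_num⟩
  · intro i
    have h1 : ⟪U i, U i⟫ = 1 := by
      rw [inner_eq]
      fin_cases i <;>
        norm_num [V, Fin.sum_univ_three, Matrix.cons_val_two] <;> field_simp <;> nlinarith [h5]
    have := real_inner_self_eq_norm_sq (U i)
    nlinarith [norm_nonneg (U i)]
  · intro i j hij
    rw [inner_eq]
    fin_cases i <;> fin_cases j <;>
      first
        | exact absurd rfl hij
        | (norm_num [V, Fin.sum_univ_three, Matrix.cons_val_two]; field_simp; nlinarith [h5])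

end
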